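/- arXiv:2309.09004 — 3 statements merged into one kernel-verified Lean document; each statement's English description precedes it below -/
import Mathlib

section
/- Let d₁, d₂ ≥ 1 be integers, 1 ≤ p < ∞, and let G₁ ⊂ ℝ^{d₁} and G₂ ⊂ ℝ^{d₂} be bounded open sets. Let f : G₁ × ℝ^{d₁} × G₂ → ℝ be measurable and such that for almost every x̄ ∈ G₁ the function (y,ζ) ↦ f(x̄,y,ζ) is bounded and continuous on ℝ^{d₁} × G₂. Then for every ε > 0, writing points of the thin domain G_ε = G₁ × εG₂ as x = (x̄, x̂) with x̄ ∈ G₁ and x̂ ∈ εG₂, one has ε^{-d₂} ∫_{G₁ × εG₂} |f(x̄, x̄/ε, x̂/ε)|^p dx ≤ ∫_{G₁} sup_{y ∈ ℝ^{d₁}} ∫_{G₂} |f(x̄, y, ζ)|^p dζ dx̄, where the inequality is understood in [0, +∞]. -/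
open MeasureTheory
open scoped Pointwise ENNReal

/-- **Inequality (2.4) of Lemma 2.1.** For `f : G₁ × ℝ^{d₁} × G₂ → ℝ` measurable, with
`f(xb, ·, ·)` bounded and continuous on `ℝ^{d₁} × G₂` for a.e. `xb ∈ G₁`, and any `ε > 0`,
`ε^{-d₂} ∫_{G₁ × εG₂} |f(xb, xb/ε, x̂/ε)|^p dx ≤ ∫_{G₁} sup_y ∫_{G₂} |f(xb,y,ζ)|^p dζ dxb`,
the inequality being understood in `[0,∞]`. -/
theorem stmt2 (d₁ d₂ : ℕ) (hd₁ : 1 ≤ d₁) (hd₂ : 1 ≤ d₂) (p : ℝ) (hp : 1 ≤ p)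
    (G₁ : Set (Fin d₁ → ℝ)) (hG₁o : IsOpen G₁) (hG₁b : Bornology.IsBounded G₁)
    (G₂ : Set (Fin d₂ → ℝ)) (hG₂o : IsOpen G₂) (hG₂b : Bornology.IsBounded G₂)
    (f : (Fin d₁ → ℝ) → (Fin d₁ → ℝ) → (Fin d₂ → ℝ) → ℝ)
    (hfm : Measurable (fun q : (Fin d₁ → ℝ) × (Fin d₁ → ℝ) × (Fin d₂ → ℝ) =>
      f q.1 q.2.1 q.2.2))
    (hfbc : ∀ᵐ xb ∂(volume.restrict G₁),
      (∃ M : ℝ, ∀ y ζ, ζ ∈ G₂ → |f xb y ζ| ≤ M) ∧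
        ContinuousOn (fun q : (Fin d₁ → ℝ) × (Fin d₂ → ℝ) => f xb q.1 q.2)
          (Set.univ ×ˢ G₂))
    (ε : ℝ) (hε : 0 < ε) :
    (ENNReal.ofReal (ε ^ d₂))⁻¹ *
        ∫⁻ x in G₁ ×ˢ (ε • G₂), ENNReal.ofReal (|f x.1 (ε⁻¹ • x.1) (ε⁻¹ • x.2)| ^ p) ≤
      ∫⁻ xb in G₁, ⨆ y : Fin d₁ → ℝ, ∫⁻ ζ in G₂, ENNReal.ofReal (|f xb y ζ| ^ p) := by
  have hεne : ε ≠ 0 := hε.ne'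
  -- measurability of the integrand on the product
  have hF : Measurable (fun x : (Fin d₁ → ℝ) × (Fin d₂ → ℝ) =>
      ENNReal.ofReal (|f x.1 (ε⁻¹ • x.1) (ε⁻¹ • x.2)| ^ p)) := by
    apply Measurable.ennreal_ofReal
    exact (Real.continuous_rpow_const (by linarith)).measurable.comp
      (hfm.comp (measurable_fst.prodMk
        (((measurable_fst.const_smul ε⁻¹)).prodMk (measurable_snd.const_smul ε⁻¹)))).abs
  -- split the product integral
  rw [Measure.volume_eq_prod, ← Measure.prod_restrict, lintegral_prod _ hF.aemeasurable]
  -- key computation for the inner integral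
  have key : ∀ xb : Fin d₁ → ℝ,
      ∫⁻ xh in ε • G₂, ENNReal.ofReal (|f xb (ε⁻¹ • xb) (ε⁻¹ • xh)| ^ p) =
      ENNReal.ofReal (ε ^ d₂) * ∫⁻ ζ in G₂, ENNReal.ofReal (|f xb (ε⁻¹ • xb) ζ| ^ p) := by
    intro xb
    have hg : Measurable (fun ζ => ENNReal.ofReal (|f xb (ε⁻¹ • xb) ζ| ^ p)) := by
      apply Measurable.ennreal_ofReal
      exact (Real.continuous_rpow_const (by linarith)).measurable.comp
        (hfm.comp (measurable_const.prodMk (measurable_const.prodMk measurable_id))).abs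
    have hsm : Measurable (fun x : Fin d₂ → ℝ => ε⁻¹ • x) := measurable_const_smul _
    have hmap : Measure.map (fun x : Fin d₂ → ℝ => ε⁻¹ • x)
        (volume.restrict (ε • G₂)) = (ENNReal.ofReal (ε ^ d₂)) • volume.restrict G₂ := by
      have hpre : (fun x : Fin d₂ → ℝ => ε⁻¹ • x) ⁻¹' G₂ = ε • G₂ := by
        rw [Set.preimage_smul₀ (inv_ne_zero hεne), inv_inv]
      rw [← hpre, ← Measure.restrict_map hsm hG₂o.measurableSet,
        show (fun x : Fin d₂ → ℝ => ε⁻¹ • x) = (ε⁻¹ • ·) from rfl,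
        Measure.map_addHaar_smul volume (inv_ne_zero hεne), Measure.restrict_smul]
      congr 1
      rw [inv_pow, inv_inv, abs_of_pos (pow_pos hε _)]
      congr 1
      simp [Module.finrank_fintype_fun_eq_card]
    calc ∫⁻ xh in ε • G₂, ENNReal.ofReal (|f xb (ε⁻¹ • xb) (ε⁻¹ • xh)| ^ p)
        = ∫⁻ ζ, ENNReal.ofReal (|f xb (ε⁻¹ • xb) ζ| ^ p)
            ∂(Measure.map (fun x : Fin d₂ → ℝ => ε⁻¹ • x) (volume.restrict (ε • G₂))) := by
          rw [lintegral_map hg hsm]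
      _ = ENNReal.ofReal (ε ^ d₂) * ∫⁻ ζ in G₂, ENNReal.ofReal (|f xb (ε⁻¹ • xb) ζ| ^ p) := by
          rw [hmap, lintegral_smul_measure, smul_eq_mul]
  simp only [key]
  rw [lintegral_const_mul' _ _ ENNReal.ofReal_ne_top, ← mul_assoc,
    ENNReal.inv_mul_cancel (by positivity) ENNReal.ofReal_ne_top, one_mul]
  refine lintegral_mono fun xb => ?_
  exact le_iSup (fun y => ∫⁻ ζ in G₂, ENNReal.ofReal (|f xb y ζ| ^ p)) (ε⁻¹ • xb)
end

section
/- Let m ≥ 1 and let G ⊂ ℝ^m be a bounded open set. Let C_b(ℝ^m) denote the Banach space of bounded continuous real-valued functions on ℝ^m with the supremum norm. Let g : G → C_b(ℝ^m) be Bochner integrable and let M : G → ℝ be Lebesgue integrable. Assume that for almost every x ∈ G, the dilations of g(x) converge weakly-* in L^∞(ℝ^m) to the constant M(x), i.e., for every φ ∈ L¹(ℝ^m), ∫_{ℝ^m} g(x)(y/ε) φ(y) dy → M(x)·∫_{ℝ^m} φ(y) dy as ε → 0⁺. Then ∫_G g(x)(x/ε) dx → ∫_G M(x) dx as ε → 0⁺.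 -/
open Filter MeasureTheory
open scoped ENNReal

lemma stmt3_mul_indicator {α : Type*} (A : Set α) (f : α → ℝ) :
    (fun y => f y * A.indicator (fun _ => (1 : ℝ)) y) = A.indicator f := by
  funext y; by_cases h : y ∈ A <;> simp [h]

lemma stmt3_eval_integrableOn {m : ℕ} (f : BoundedContinuousFunction (Fin m → ℝ) ℝ) (ε : ℝ)
    {A : Set (Fin m → ℝ)} (hA : MeasurableSet A) (hAfin : volume A < ∞) :
    IntegrableOn (fun y => f (ε⁻¹ • y)) A volume := by
  have hc : Continuous fun y : Fin m → ℝ => f (ε⁻¹ • y) :=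
    f.continuous.comp (continuous_const_smul ε⁻¹)
  refine Integrable.mono' (g := fun _ => ‖f‖) (integrableOn_const hAfin.ne)
    hc.aestronglyMeasurable.restrict ?_
  exact Eventually.of_forall fun y => f.norm_coe_le_norm _

lemma stmt3_decomp {α : Type*} [MeasurableSpace α] {E : Type*} [MeasurableSpace E]
    (σ : SimpleFunc α E) (h : E → α → ℝ) :
    (fun x => h (σ x) x) = fun x => ∑ c ∈ σ.range, (σ ⁻¹' {c}).indicator (h c) x := by
  funext x
  rw [Finset.sum_eq_single_of_mem (σ x) (σ.mem_range_self x)]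
  · simp [Set.indicator_of_mem, Set.mem_preimage]
  · intro c _ hc
    apply Set.indicator_of_notMem
    simp only [Set.mem_preimage, Set.mem_singleton_iff]
    exact fun h' => hc h'.symm

lemma stmt3_lip {m : ℕ} (f₁ f₂ : BoundedContinuousFunction (Fin m → ℝ) ℝ) (M₁ M₂ : ℝ)
    (h₁ : ∀ φ : (Fin m → ℝ) → ℝ, Integrable φ volume →
      Tendsto (fun ε : ℝ => ∫ y, f₁ (ε⁻¹ • y) * φ y) (nhdsWithin 0 (Set.Ioi 0))
        (nhds (M₁ * ∫ y, φ y)))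
    (h₂ : ∀ φ : (Fin m → ℝ) → ℝ, Integrable φ volume →
      Tendsto (fun ε : ℝ => ∫ y, f₂ (ε⁻¹ • y) * φ y) (nhdsWithin 0 (Set.Ioi 0))
        (nhds (M₂ * ∫ y, φ y))) : |M₁ - M₂| ≤ ‖f₁ - f₂‖ := by
  set B := Metric.ball (0 : Fin m → ℝ) 1 with hBdef
  have hB : MeasurableSet B := measurableSet_ball
  have hBfin : volume B < ∞ := measure_ball_lt_top
  have hBpos : 0 < (volume B).toReal :=
    ENNReal.toReal_pos (Metric.measure_ball_pos volume 0 one_pos).ne' hBfin.ne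
  set φ : (Fin m → ℝ) → ℝ := B.indicator fun _ => 1 with hφdef
  have hφ : Integrable φ volume :=
    (integrable_indicator_iff hB).2 (integrableOn_const hBfin.ne)
  have hφint : ∫ y, φ y = (volume B).toReal := integral_indicator_one hB
  have key := ((h₁ φ hφ).sub (h₂ φ hφ)).abs
  have hbound : ∀ ε : ℝ,
      |(∫ y, f₁ (ε⁻¹ • y) * φ y) - ∫ y, f₂ (ε⁻¹ • y) * φ y| ≤ ‖f₁ - f₂‖ * (volume B).toReal := by
    intro ε
    have e1 : (∫ y, f₁ (ε⁻¹ • y) * φ y) = ∫ y in B, f₁ (ε⁻¹ • y) := by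
      rw [hφdef, stmt3_mul_indicator B fun y => f₁ (ε⁻¹ • y), integral_indicator hB]
    have e2 : (∫ y, f₂ (ε⁻¹ • y) * φ y) = ∫ y in B, f₂ (ε⁻¹ • y) := by
      rw [hφdef, stmt3_mul_indicator B fun y => f₂ (ε⁻¹ • y), integral_indicator hB]
    rw [e1, e2, ← integral_sub (stmt3_eval_integrableOn f₁ ε hB hBfin)
      (stmt3_eval_integrableOn f₂ ε hB hBfin), ← Real.norm_eq_abs]
    refine norm_setIntegral_le_of_norm_le_const hBfin fun y _ => ?_
    have := BoundedContinuousFunction.norm_coe_le_norm (f₁ - f₂) (ε⁻¹ • y)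
    simpa using this
  rw [hφint] at key
  have hle := le_of_tendsto key (Eventually.of_forall hbound)
  rw [← sub_mul, abs_mul, abs_of_pos hBpos] at hle
  exact le_of_mul_le_mul_right hle hBpos

/-- **Key convergence step in the proof of (2.5), Lemma 2.1.** Let `G ⊂ ℝ^m` be a bounded
open set, `g : G → C_b(ℝ^m)` Bochner integrable and `M : G → ℝ` Lebesgue integrable. If for
a.e. `x ∈ G` the dilations of `g x` converge weakly-* in `L^∞(ℝ^m)` to the constant `M x`,
then `∫_G g(x)(x/ε) dx → ∫_G M(x) dx` as `ε → 0⁺`. -/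
theorem stmt3 (m : ℕ) (hm : 1 ≤ m) (G : Set (Fin m → ℝ)) (hGo : IsOpen G)
    (hGb : Bornology.IsBounded G)
    (g : (Fin m → ℝ) → BoundedContinuousFunction (Fin m → ℝ) ℝ)
    (hg : Integrable g (volume.restrict G))
    (M : (Fin m → ℝ) → ℝ) (hM : Integrable M (volume.restrict G))
    (hmean : ∀ᵐ x ∂(volume.restrict G), ∀ φ : (Fin m → ℝ) → ℝ, Integrable φ volume →
      Tendsto (fun ε : ℝ => ∫ y, (g x) (ε⁻¹ • y) * φ y) (nhdsWithin 0 (Set.Ioi 0))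
        (nhds ((M x) * ∫ y, φ y))) :
    Tendsto (fun ε : ℝ => ∫ x in G, (g x) (ε⁻¹ • x)) (nhdsWithin 0 (Set.Ioi 0))
      (nhds (∫ x in G, M x)) := by
  classical
  borelize (BoundedContinuousFunction (Fin m → ℝ) ℝ)
  set μ := volume.restrict G with hμdef
  haveI : IsFiniteMeasure μ := ⟨by rw [hμdef, Measure.restrict_apply_univ]; exact hGb.measure_lt_top⟩
  obtain ⟨g₀, hg₀sm, hgg₀⟩ := hg.aestronglyMeasurable
  have hae := hgg₀.and hmean
  obtain ⟨N, hNsub, hNmeas, hNnull⟩ := exists_measurable_superset_of_null (ae_iff.mp hae)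
  set T := Nᶜ with hTdef
  have hTmeas : MeasurableSet T := hNmeas.compl
  have hTc : μ Tᶜ = 0 := by rw [hTdef, compl_compl]; exact hNnull
  have hT : ∀ x ∈ T, g x = g₀ x ∧ ∀ φ : (Fin m → ℝ) → ℝ, Integrable φ volume →
      Tendsto (fun ε : ℝ => ∫ y, (g x) (ε⁻¹ • y) * φ y) (nhdsWithin 0 (Set.Ioi 0))
        (nhds ((M x) * ∫ y, φ y)) := by
    intro x hx
    by_contra h
    exact hx (hNsub h)
  rcases Set.eq_empty_or_nonempty T with hTe | ⟨x₀, hx₀⟩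
  · have h0 : μ = 0 := Measure.measure_univ_eq_zero.mp (by
      rw [← Set.compl_empty, ← hTe]; exact hTc)
    simp only [h0, integral_zero_measure]
    exact tendsto_const_nhds
  have hTae : ∀ᵐ x ∂μ, x ∈ T := by
    rw [ae_iff]
    exact hTc
  set s : Set (BoundedContinuousFunction (Fin m → ℝ) ℝ) := g '' T with hsdef
  have hx₀s : g x₀ ∈ s := ⟨x₀, hx₀, rfl⟩
  set g' : (Fin m → ℝ) → BoundedContinuousFunction (Fin m → ℝ) ℝ :=
    T.piecewise g₀ (fun _ => g x₀) with hg'def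
  have hg'T : ∀ x ∈ T, g' x = g x := fun x hx => by
    rw [hg'def, Set.piecewise_eq_of_mem _ _ _ hx, ← (hT x hx).1]
  have hg'sm : StronglyMeasurable g' :=
    StronglyMeasurable.piecewise hTmeas hg₀sm stronglyMeasurable_const
  have hg'ae : g' =ᵐ[μ] g := by
    refine measure_mono_null (fun x hx => ?_) hTc
    simp only [Set.mem_setOf_eq] at hx
    by_contra hxT
    simp only [Set.mem_compl_iff, not_not] at hxT
    exact hx (hg'T x hxT)
  have hg'int : Integrable g' μ := hg.congr hg'ae.symm
  have hrange : ∀ x, g' x ∈ s := fun x => by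
    by_cases hx : x ∈ T
    · rw [hg'T x hx]; exact ⟨x, hx, rfl⟩
    · rw [hg'def, Set.piecewise_eq_of_notMem _ _ _ hx]; exact hx₀s
  have hssub : s ⊆ Set.range g' := by
    rintro c ⟨x, hx, rfl⟩
    exact ⟨x, hg'T x hx⟩
  have hsep : TopologicalSpace.IsSeparable s := hg'sm.isSeparable_range.mono hssub
  haveI : TopologicalSpace.SeparableSpace s := hsep.separableSpace
  have hg'meas : Measurable g' := hg'sm.measurable
  set σ : ℕ → SimpleFunc (Fin m → ℝ) (BoundedContinuousFunction (Fin m → ℝ) ℝ) :=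
    fun n => SimpleFunc.approxOn g' hg'meas s (g x₀) hx₀s n with hσdef
  have hσmem : ∀ n x, σ n x ∈ s := fun n x => SimpleFunc.approxOn_mem hg'meas hx₀s n x
  have hσint : ∀ n, Integrable (σ n) μ := fun n =>
    SimpleFunc.integrable_approxOn hg'meas hg'int hx₀s (integrable_const _) n
  have hL1 : Tendsto (fun n => ∫ x, ‖σ n x - g' x‖ ∂μ) atTop (nhds 0) := by
    have h := SimpleFunc.tendsto_approxOn_L1_enorm hg'meas hx₀s
      (Eventually.of_forall fun x => subset_closure (hrange x))
      (hg'int.sub (integrable_const (g x₀))).2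
    have h2 : Tendsto (fun n => (∫⁻ x, ‖σ n x - g' x‖ₑ ∂μ).toReal) atTop (nhds 0) := by
      have h3 := (ENNReal.tendsto_toReal (by simp)).comp h
      rw [ENNReal.toReal_zero] at h3
      exact h3
    refine h2.congr fun n => ?_
    exact (integral_norm_eq_lintegral_enorm
      (((σ n).stronglyMeasurable.sub hg'sm).aestronglyMeasurable)).symm
  have hwT : ∀ c ∈ s, (fun c => if hc : c ∈ s then hc.choose else x₀) c ∈ T ∧
      g ((fun c => if hc : c ∈ s then hc.choose else x₀) c) = c := by
    intro c hc
    simp only [dif_pos hc]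
    exact hc.choose_spec
  set w : BoundedContinuousFunction (Fin m → ℝ) ℝ → (Fin m → ℝ) :=
    fun c => if hc : c ∈ s then hc.choose else x₀ with hwdef
  set Aset : ℕ → BoundedContinuousFunction (Fin m → ℝ) ℝ → Set (Fin m → ℝ) :=
    fun n c => (σ n) ⁻¹' {c} ∩ G with hAdef
  have hAmeas : ∀ n c, MeasurableSet (Aset n c) := fun n c =>
    ((σ n).measurableSet_fiber c).inter hGo.measurableSet
  have hAfin : ∀ n c, volume (Aset n c) < ⊤ := fun n c =>
    lt_of_le_of_lt (measure_mono Set.inter_subset_right) hGb.measure_lt_top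
  have hrestr : ∀ n c, μ.restrict ((σ n) ⁻¹' {c}) = volume.restrict (Aset n c) := by
    intro n c
    rw [hμdef, Measure.restrict_restrict ((σ n).measurableSet_fiber c)]
  set S : ℕ → ℝ := fun n => ∑ c ∈ (σ n).range, M (w c) * (volume (Aset n c)).toReal with hSdef
  -- Claim A
  have claimA : ∀ n, Tendsto (fun ε : ℝ => ∫ x, (σ n x) (ε⁻¹ • x) ∂μ)
      (nhdsWithin 0 (Set.Ioi 0)) (nhds (S n)) := by
    intro n
    have hrw : ∀ ε : ℝ, ∫ x, (σ n x) (ε⁻¹ • x) ∂μ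
        = ∑ c ∈ (σ n).range, ∫ y in Aset n c, c (ε⁻¹ • y) := by
      intro ε
      rw [show (fun x => (σ n x) (ε⁻¹ • x))
          = fun x => ∑ c ∈ (σ n).range, ((σ n) ⁻¹' {c}).indicator (fun y => c (ε⁻¹ • y)) x from
        stmt3_decomp (σ n) (fun c y => c (ε⁻¹ • y))]
      rw [integral_finset_sum _ (fun c _ => ?_)]
      · refine Finset.sum_congr rfl fun c _ => ?_
        rw [integral_indicator ((σ n).measurableSet_fiber c), hrestr n c]
      · rw [integrable_indicator_iff ((σ n).measurableSet_fiber c)]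
        have := stmt3_eval_integrableOn c ε (hAmeas n c) (hAfin n c)
        rwa [IntegrableOn, hrestr n c]
    simp only [hrw]
    apply tendsto_finset_sum
    intro c hc
    have hcs : c ∈ s := by
      obtain ⟨x, hx⟩ := SimpleFunc.mem_range.mp hc
      exact hx ▸ hσmem n x
    obtain ⟨hwT', hgw⟩ := hwT c hcs
    have hP := (hT _ hwT').2
    have hφ : Integrable ((Aset n c).indicator fun _ => (1:ℝ)) volume :=
      (integrable_indicator_iff (hAmeas n c)).2 (integrableOn_const (hAfin n c).ne)
    have hlim := hP ((Aset n c).indicator fun _ => (1:ℝ)) hφ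
    have hφint : (∫ y, (Aset n c).indicator (fun _ => (1:ℝ)) y) = (volume (Aset n c)).toReal :=
      integral_indicator_one (hAmeas n c)
    rw [hgw, hφint] at hlim
    refine hlim.congr fun ε => ?_
    rw [stmt3_mul_indicator (Aset n c) fun y => c (ε⁻¹ • y), integral_indicator (hAmeas n c)]
  -- integrability of evaluations
  have hint1 : ∀ ε : ℝ, Integrable (fun x => (g' x) (ε⁻¹ • x)) μ := by
    intro ε
    have hsm : AEStronglyMeasurable (fun x => (g' x) (ε⁻¹ • x)) μ :=
      (continuous_eval.comp_stronglyMeasurable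
        (hg'sm.prodMk ((continuous_const_smul ε⁻¹).stronglyMeasurable))).aestronglyMeasurable
    exact hg'int.norm.mono' hsm
      (Eventually.of_forall fun x => by simpa using (g' x).norm_coe_le_norm (ε⁻¹ • x))
  have hint2 : ∀ n (ε : ℝ), Integrable (fun x => (σ n x) (ε⁻¹ • x)) μ := by
    intro n ε
    have hsm : AEStronglyMeasurable (fun x => (σ n x) (ε⁻¹ • x)) μ :=
      (continuous_eval.comp_stronglyMeasurable
        ((σ n).stronglyMeasurable.prodMk
          ((continuous_const_smul ε⁻¹).stronglyMeasurable))).aestronglyMeasurable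
    exact (hσint n).norm.mono' hsm
      (Eventually.of_forall fun x => by simpa using (σ n x).norm_coe_le_norm (ε⁻¹ • x))
  -- Claim B
  have claimB : ∀ n (ε : ℝ), |(∫ x, (g' x) (ε⁻¹ • x) ∂μ) - ∫ x, (σ n x) (ε⁻¹ • x) ∂μ|
      ≤ ∫ x, ‖σ n x - g' x‖ ∂μ := by
    intro n ε
    rw [← integral_sub (hint1 ε) (hint2 n ε), ← Real.norm_eq_abs]
    refine le_trans (norm_integral_le_integral_norm _) (integral_mono
      ((hint1 ε).sub (hint2 n ε)).norm ((hσint n).sub hg'int).norm fun x => ?_)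
    rw [norm_sub_rev]
    simpa using (σ n x - g' x).norm_coe_le_norm (ε⁻¹ • x)
  -- Claim C
  have claimC : ∀ n, |S n - ∫ x, M x ∂μ| ≤ ∫ x, ‖σ n x - g' x‖ ∂μ := by
    intro n
    have hdec := stmt3_decomp (σ n) (fun c _ => M (w c))
    have hintpieces : ∀ c ∈ (σ n).range,
        Integrable (((σ n) ⁻¹' {c}).indicator fun _ => M (w c)) μ := fun c _ =>
      (integrable_indicator_iff ((σ n).measurableSet_fiber c)).2
        (integrableOn_const (measure_lt_top _ _).ne)
    have hMsig_int : Integrable (fun x => M (w (σ n x))) μ := by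
      rw [hdec]
      exact integrable_finset_sum _ hintpieces
    have hS : S n = ∫ x, M (w (σ n x)) ∂μ := by
      rw [hdec, integral_finset_sum _ hintpieces, hSdef]
      refine Finset.sum_congr rfl fun c _ => ?_
      rw [integral_indicator ((σ n).measurableSet_fiber c), setIntegral_const, Measure.real,
        hμdef, Measure.restrict_apply ((σ n).measurableSet_fiber c)]
      rw [smul_eq_mul, mul_comm]
    have hpt : ∀ x ∈ T, |M (w (σ n x)) - M x| ≤ ‖σ n x - g' x‖ := by
      intro x hx
      obtain ⟨h1, h2⟩ := hwT (σ n x) (hσmem n x)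
      have := stmt3_lip (g (w (σ n x))) (g x) (M (w (σ n x))) (M x) (hT _ h1).2 (hT x hx).2
      rwa [h2, ← hg'T x hx] at this
    rw [hS, ← integral_sub hMsig_int hM, ← Real.norm_eq_abs]
    refine le_trans (norm_integral_le_integral_norm _) (integral_mono_ae
      (hMsig_int.sub hM).norm ((hσint n).sub hg'int).norm ?_)
    filter_upwards [hTae] with x hx
    simpa using hpt x hx
  -- Assemble
  have hgoal : ∀ ε : ℝ, (∫ x in G, (g x) (ε⁻¹ • x)) = ∫ x, (g' x) (ε⁻¹ • x) ∂μ := by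
    intro ε
    refine integral_congr_ae ?_
    filter_upwards [hg'ae] with x hx
    rw [hx]
  rw [Metric.tendsto_nhds]
  intro δ hδ
  obtain ⟨n, hn⟩ : ∃ n, ∫ x, ‖σ n x - g' x‖ ∂μ < δ / 3 :=
    (hL1.eventually (gt_mem_nhds (by linarith))).exists
  filter_upwards [Metric.tendsto_nhds.mp (claimA n) (δ / 3) (by linarith)] with ε hε
  rw [Real.dist_eq, hgoal ε]
  rw [Real.dist_eq] at hε
  calc |(∫ x, (g' x) (ε⁻¹ • x) ∂μ) - ∫ x, M x ∂μ|
      ≤ |(∫ x, (g' x) (ε⁻¹ • x) ∂μ) - ∫ x, (σ n x) (ε⁻¹ • x) ∂μ|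
        + |(∫ x, (σ n x) (ε⁻¹ • x) ∂μ) - S n| + |S n - ∫ x, M x ∂μ| := by
        have h1 := abs_sub_le (∫ x, (g' x) (ε⁻¹ • x) ∂μ) (S n) (∫ x, M x ∂μ)
        have h2 := abs_sub_le (∫ x, (g' x) (ε⁻¹ • x) ∂μ) (∫ x, (σ n x) (ε⁻¹ • x) ∂μ) (S n)
        linarith
    _ < δ := by linarith [claimB n ε, claimC n, hε, hn]
end

section
/- Let d ≥ 2 be an integer, Ω ⊂ ℝ^{d−1} a bounded open set, f₁ ∈ L²(Ω; ℝ^{d−1}), and ε > 0. Let u : ℝ^d → ℝ^d be continuously differentiable with compact support contained in the thin domain Ω^ε = Ω × (−ε, ε), and write u = (u', u_d) where u' consists of the first d−1 components of u. Then |∫_{Ω^ε} f₁(x̄) · u'(x) dx| ≤ 2√2 · ε^{3/2} · ‖f₁‖_{L²(Ω)} · ‖∇u‖_{L²(Ω^ε)}. -/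
open MeasureTheory

/-- Points of the thin domain `Ω^ε ⊂ ℝ^d` are written `x = (xb, x_d)` with
`xb ∈ ℝ^{d-1}` and `x_d ∈ ℝ`. -/
abbrev ThinVec (d : ℕ) : Type := (Fin (d - 1) → ℝ) × ℝ

/-- Squared Euclidean magnitude of a vector of `ℝ^d = ℝ^{d-1} × ℝ`. -/
noncomputable def vecSq {d : ℕ} (v : ThinVec d) : ℝ := (∑ i, (v.1 i) ^ 2) + v.2 ^ 2

/-- Squared Frobenius norm `Σ_{i,j} |∂u_i/∂x_j|²` of the Jacobian of a vector field
`u : ℝ^d → ℝ^d`. -/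
noncomputable def jacSq {d : ℕ} (u : ThinVec d → ThinVec d) (x : ThinVec d) : ℝ :=
  (∑ j, vecSq (fderiv ℝ u x ((Pi.single j 1 : Fin (d - 1) → ℝ), (0 : ℝ)))) +
    vecSq (fderiv ℝ u x ((0 : Fin (d - 1) → ℝ), (1 : ℝ)))

lemma vecSq_nonneg {d : ℕ} (v : ThinVec d) : 0 ≤ vecSq v :=
  add_nonneg (Finset.sum_nonneg fun _ _ => sq_nonneg _) (sq_nonneg _)

lemma integral_CS {α : Type*} [MeasurableSpace α] {μ : Measure α} {f g : α → ℝ}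
    (hf : MemLp f 2 μ) (hg : MemLp g 2 μ) :
    ∫ x, f x * g x ∂μ ≤ Real.sqrt (∫ x, f x ^ 2 ∂μ) * Real.sqrt (∫ x, g x ^ 2 ∂μ) := by
  set F := hf.toLp f with hF
  set G := hg.toLp g with hG
  have key : ∀ (φ ψ : α → ℝ) (Φ Ψ : Lp ℝ 2 μ), (Φ : α → ℝ) =ᵐ[μ] φ → (Ψ : α → ℝ) =ᵐ[μ] ψ →
      ∫ x, φ x * ψ x ∂μ = inner (𝕜 := ℝ) Φ Ψ := by
    intro φ ψ Φ Ψ hΦ hΨ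
    rw [MeasureTheory.L2.inner_def]
    refine (integral_congr_ae ?_).symm
    filter_upwards [hΦ, hΨ] with x h1 h2
    simp [h1, h2, RCLike.inner_apply, mul_comm]
  have h1 : ∫ x, f x * g x ∂μ = inner (𝕜 := ℝ) F G :=
    key f g F G (MemLp.coeFn_toLp hf) (MemLp.coeFn_toLp hg)
  have h2 : ∫ x, f x ^ 2 ∂μ = ‖F‖ ^ 2 := by
    rw [← real_inner_self_eq_norm_sq, ← key f f F F (MemLp.coeFn_toLp hf) (MemLp.coeFn_toLp hf)]
    simp [sq]
  have h3 : ∫ x, g x ^ 2 ∂μ = ‖G‖ ^ 2 := by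
    rw [← real_inner_self_eq_norm_sq, ← key g g G G (MemLp.coeFn_toLp hg) (MemLp.coeFn_toLp hg)]
    simp [sq]
  rw [h1, h2, h3, Real.sqrt_sq (norm_nonneg _), Real.sqrt_sq (norm_nonneg _)]
  exact real_inner_le_norm F G

lemma poincare1d {ε : ℝ} (hε : 0 < ε) (v : ℝ → ℝ) (hv : ContDiff ℝ 1 v)
    (h0 : ∀ t ∉ Set.Ioo (-ε) ε, v t = 0) :
    ∫ t in Set.Ioo (-ε) ε, v t ^ 2 ≤ (2 * ε) ^ 2 * ∫ t in Set.Ioo (-ε) ε, (deriv v t) ^ 2 := by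
  have hvc : Continuous v := hv.continuous
  have hdc : Continuous (deriv v) := hv.continuous_deriv le_rfl
  set I := Set.Ioo (-ε) ε with hI
  have hεε : (-ε : ℝ) ≤ ε := by linarith
  have hId : IntegrableOn (fun t => (deriv v t) ^ 2) I := by
    have : IntegrableOn (fun t => (deriv v t) ^ 2) (Set.Icc (-ε) ε) :=
      ((hdc.pow 2).continuousOn).integrableOn_Icc
    exact this.mono_set Set.Ioo_subset_Icc_self
  have hJ : (0:ℝ) ≤ ∫ t in I, (deriv v t) ^ 2 :=
    integral_nonneg fun t => sq_nonneg _
  set M : ℝ := Real.sqrt (2 * ε) * Real.sqrt (∫ t in I, (deriv v t) ^ 2) with hM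
  have hMnn : 0 ≤ M := mul_nonneg (Real.sqrt_nonneg _) (Real.sqrt_nonneg _)
  have hder2 : MemLp (fun t => |deriv v t|) 2 (volume.restrict I) := by
    refine (memLp_two_iff_integrable_sq ?_).2 ?_
    · exact (hdc.abs.aestronglyMeasurable).restrict
    · simpa [sq_abs] using hId.integrable
  have hone : MemLp (fun _ : ℝ => (1:ℝ)) 2 (volume.restrict I) := by
    refine memLp_const _
  have hvolI : (volume I).toReal = 2 * ε := by
    rw [hI, Real.volume_Ioo]
    rw [ENNReal.toReal_ofReal (by linarith)]
    ring
  have hbound : ∀ t ∈ I, |v t| ≤ M := by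
    intro t ht
    have hta : -ε ≤ t := le_of_lt ht.1
    have htb : t ≤ ε := le_of_lt ht.2
    have hveps : v (-ε) = 0 := h0 _ (fun h => absurd h.1 (lt_irrefl _))
    have hftc : ∫ s in (-ε)..t, deriv v s = v t - v (-ε) := by
      apply intervalIntegral.integral_deriv_eq_sub
      · intro x _; exact (hv.differentiable one_ne_zero).differentiableAt
      · exact hdc.intervalIntegrable _ _
    have h1 : |v t| = |∫ s in (-ε)..t, deriv v s| := by rw [hftc, hveps, sub_zero]
    have h2 : |∫ s in (-ε)..t, deriv v s| ≤ ∫ s in (-ε)..t, |deriv v s| := by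
      exact intervalIntegral.abs_integral_le_integral_abs hta
    have h3 : (∫ s in (-ε)..t, |deriv v s|) ≤ ∫ s in (-ε)..ε, |deriv v s| := by
      apply intervalIntegral.integral_mono_interval le_rfl hta htb
      · filter_upwards with s using abs_nonneg _
      · exact hdc.abs.intervalIntegrable _ _
    have h4 : (∫ s in (-ε)..ε, |deriv v s|) = ∫ s in I, |deriv v s| := by
      rw [intervalIntegral.integral_of_le hεε, ← integral_Ioc_eq_integral_Ioo]
    have h5 : (∫ s in I, |deriv v s|) ≤ M := by
      have := integral_CS (μ := volume.restrict I) hder2 hone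
      simp only [mul_one, one_pow] at this
      calc (∫ s in I, |deriv v s|) = ∫ s in I, |deriv v s| * 1 := by simp
        _ ≤ Real.sqrt (∫ s in I, |deriv v s| ^ 2) * Real.sqrt (∫ s in I, (1:ℝ)) := by
            simpa using this
        _ = M := by
            rw [setIntegral_const, smul_eq_mul, mul_one, measureReal_def, hvolI, hM, mul_comm]
            congr 1
            simp [sq_abs]
    calc |v t| = |∫ s in (-ε)..t, deriv v s| := h1
      _ ≤ ∫ s in (-ε)..t, |deriv v s| := h2
      _ ≤ ∫ s in (-ε)..ε, |deriv v s| := h3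
      _ = ∫ s in I, |deriv v s| := h4
      _ ≤ M := h5
  have hv2int : IntegrableOn (fun t => v t ^ 2) I :=
    (((hvc.pow 2).continuousOn).integrableOn_Icc).mono_set Set.Ioo_subset_Icc_self
  have hlt : volume I < ⊤ := by rw [hI, Real.volume_Ioo]; exact ENNReal.ofReal_lt_top
  have : ∫ t in I, v t ^ 2 ≤ ∫ t in I, M ^ 2 := by
    apply setIntegral_mono_on hv2int (integrableOn_const hlt.ne) measurableSet_Ioo
    intro t ht
    calc v t ^ 2 = |v t| ^ 2 := (sq_abs _).symm
      _ ≤ M ^ 2 := by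
          apply pow_le_pow_left₀ (abs_nonneg _) (hbound t ht)
  calc ∫ t in I, v t ^ 2 ≤ ∫ t in I, M ^ 2 := this
      _ = (2 * ε) * M ^ 2 := by rw [setIntegral_const, smul_eq_mul, measureReal_def, hvolI]
      _ = (2 * ε) * ((2 * ε) * (∫ t in I, (deriv v t) ^ 2)) := by
          rw [hM, mul_pow, Real.sq_sqrt (by linarith), Real.sq_sqrt hJ]
      _ = (2 * ε) ^ 2 * ∫ t in I, (deriv v t) ^ 2 := by ring

/-- **Right-hand-side estimate in the proof of Proposition 4.1.** For
`f₁ ∈ L²(Ω; ℝ^{d-1})` and a `C¹` vector field `u` compactly supported in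
`Ω^ε = Ω × (−ε, ε)`, writing `u = (u', u_d)`,
`|∫_{Ω^ε} f₁(xb)·u'(x) dx| ≤ 2√2 ε^{3/2} ‖f₁‖_{L²(Ω)} ‖∇u‖_{L²(Ω^ε)}`. -/
theorem stmt9 (d : ℕ) (hd : 2 ≤ d) (Ω : Set (Fin (d - 1) → ℝ)) (hΩo : IsOpen Ω)
    (hΩb : Bornology.IsBounded Ω)
    (f₁ : (Fin (d - 1) → ℝ) → (Fin (d - 1) → ℝ))
    (hf₁ : MemLp f₁ 2 (volume.restrict Ω)) (ε : ℝ) (hε : 0 < ε)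
    (u : ThinVec d → ThinVec d) (hu : ContDiff ℝ 1 u) (hus : HasCompactSupport u)
    (husub : tsupport u ⊆ Ω ×ˢ Set.Ioo (-ε) ε) :
    |∫ x in Ω ×ˢ Set.Ioo (-ε) ε, ∑ i, f₁ x.1 i * (u x).1 i| ≤
      2 * Real.sqrt 2 * ε ^ ((3 : ℝ) / 2) *
        Real.sqrt (∫ xb in Ω, ∑ i, (f₁ xb i) ^ 2) *
        Real.sqrt (∫ x in Ω ×ˢ Set.Ioo (-ε) ε, jacSq u x) := by
  classical
  set I := Set.Ioo (-ε) ε with hIdef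
  set μΩ : Measure (Fin (d-1) → ℝ) := volume.restrict Ω with hμΩ
  set μI : Measure ℝ := volume.restrict I with hμI
  set μP : Measure (ThinVec d) := volume.restrict (Ω ×ˢ I) with hμP
  haveI : IsFiniteMeasure μI := by
    constructor
    rw [hμI, Measure.restrict_apply_univ, hIdef, Real.volume_Ioo]
    exact ENNReal.ofReal_lt_top
  have hprod : μP = μΩ.prod μI := by
    rw [hμP, hμΩ, hμI, Measure.prod_restrict, ← Measure.volume_eq_prod]
  -- f₁ components
  have hfm : AEStronglyMeasurable f₁ μΩ := hf₁.aestronglyMeasurable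
  have hmi : ∀ i, AEStronglyMeasurable (fun xb => f₁ xb i) μΩ :=
    fun i => (continuous_apply i).comp_aestronglyMeasurable hfm
  have hf_i : ∀ i, MemLp (fun xb => f₁ xb i) 2 μΩ := by
    intro i
    refine (memLp_two_iff_integrable_sq (hmi i)).2 ?_
    have hnorm : Integrable (fun xb => ‖f₁ xb‖ ^ 2) μΩ := hf₁.norm.integrable_sq
    refine hnorm.mono' ?_ ?_
    · have := (hmi i).mul (hmi i)
      convert this using 1
      funext xb
      simp [pow_two]
    · filter_upwards with xb
      have h1 : ‖f₁ xb i‖ ≤ ‖f₁ xb‖ := norm_le_pi_norm (f₁ xb) i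
      have : ‖f₁ xb i ^ 2‖ = ‖f₁ xb i‖ ^ 2 := by
        rw [Real.norm_eq_abs, abs_pow, Real.norm_eq_abs]
      rw [this]
      exact pow_le_pow_left₀ (norm_nonneg _) h1 2
  set F : (Fin (d-1) → ℝ) → ℝ := fun xb => ∑ i, f₁ xb i ^ 2 with hFdef
  have hFnn : ∀ xb, 0 ≤ F xb := fun xb => Finset.sum_nonneg fun i _ => sq_nonneg _
  have hFint : Integrable F μΩ := integrable_finset_sum _ fun i _ => (hf_i i).integrable_sq
  have hFm : AEStronglyMeasurable F μΩ := hFint.aestronglyMeasurable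
  set A : ℝ := ∫ xb, F xb ∂μΩ with hA
  have hAnn : 0 ≤ A := integral_nonneg hFnn
  -- G side
  have huc : Continuous u := hu.continuous
  set G : ThinVec d → ℝ := fun x => ∑ i, (u x).1 i ^ 2 with hGdef
  have hGnn : ∀ x, 0 ≤ G x := fun x => Finset.sum_nonneg fun i _ => sq_nonneg _
  have hGc : Continuous G :=
    continuous_finset_sum _ fun i _ => ((continuous_apply i).comp (continuous_fst.comp huc)).pow 2
  have hGcs : HasCompactSupport G := by
    refine hus.mono ?_
    intro x hx
    simp only [Function.mem_support] at hx ⊢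
    intro h0
    apply hx
    simp [hGdef, h0]
  have hGint : Integrable G μP := (hGc.integrable_of_hasCompactSupport hGcs).restrict
  -- jacSq side
  have hfd : Continuous (fun x => fderiv ℝ u x) := hu.continuous_fderiv one_ne_zero
  have hEval : ∀ w : ThinVec d, Continuous fun x => fderiv ℝ u x w := fun w =>
    (ContinuousLinearMap.apply ℝ (ThinVec d) w).continuous.comp hfd
  have hvecC : ∀ w : ThinVec d, Continuous fun x => vecSq (fderiv ℝ u x w) := by
    intro w
    unfold vecSq
    have h1 : Continuous fun x => (fderiv ℝ u x w).1 := continuous_fst.comp (hEval w)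
    have h2 : Continuous fun x => (fderiv ℝ u x w).2 := continuous_snd.comp (hEval w)
    exact (continuous_finset_sum _ fun i _ => ((continuous_apply i).comp h1).pow 2).add (h2.pow 2)
  have hjc : Continuous (jacSq u) := by
    unfold jacSq
    exact (continuous_finset_sum _ fun j _ => hvecC _).add (hvecC _)
  have hjcs : HasCompactSupport (jacSq u) := by
    have h1 : HasCompactSupport (fderiv ℝ u) := hus.fderiv ℝ
    refine h1.mono' ?_
    intro x hx
    by_contra hxx
    have h0 : fderiv ℝ u x = 0 := image_eq_zero_of_notMem_tsupport hxx
    apply hx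
    simp [jacSq, h0, vecSq]
  have hJint : Integrable (jacSq u) μP := (hjc.integrable_of_hasCompactSupport hjcs).restrict
  have hjnn : ∀ x, 0 ≤ jacSq u x := fun x =>
    add_nonneg (Finset.sum_nonneg fun j _ => vecSq_nonneg _) (vecSq_nonneg _)
  set J : ℝ := ∫ x, jacSq u x ∂μP with hJ
  have hJnn : 0 ≤ J := integral_nonneg hjnn
  -- slice Poincaré
  have hcont_int : ∀ (w : ℝ → ℝ), Continuous w → Integrable w μI := fun w hw =>
    (hw.continuousOn.integrableOn_Icc).mono_set Set.Ioo_subset_Icc_self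
  have hslice : ∀ xb : Fin (d-1) → ℝ,
      (∫ t, G (xb, t) ∂μI) ≤ (2*ε)^2 * ∫ t, jacSq u (xb, t) ∂μI := by
    intro xb
    set v : Fin (d-1) → ℝ → ℝ := fun i s => (u (xb, s)).1 i with hv
    have hvC : ∀ i, ContDiff ℝ 1 (v i) := by
      intro i
      exact ((ContinuousLinearMap.proj i).comp
        (ContinuousLinearMap.fst ℝ (Fin (d-1) → ℝ) ℝ)).contDiff.comp
        (hu.comp (contDiff_const.prodMk contDiff_id))
    have hv0 : ∀ i, ∀ t ∉ I, v i t = 0 := by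
      intro i t ht
      have hu0 : u (xb, t) = 0 := by
        by_contra h
        exact ht (husub (subset_tsupport u (by simpa [Function.mem_support] using h))).2
      simp [hv, hu0]
    have hderiv : ∀ i t, deriv (v i) t
        = (fderiv ℝ u (xb, t) ((0 : Fin (d-1) → ℝ), (1:ℝ))).1 i := by
      intro i t
      have hg : HasDerivAt (fun s : ℝ => ((xb, s) : ThinVec d))
          ((0 : Fin (d-1) → ℝ), (1:ℝ)) t := (hasDerivAt_const t xb).prodMk (hasDerivAt_id t)
      have hu' : HasFDerivAt u (fderiv ℝ u (xb, t)) (xb, t) :=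
        (hu.differentiable one_ne_zero).differentiableAt.hasFDerivAt
      have hcomp : HasDerivAt (fun s => u (xb, s))
          (fderiv ℝ u (xb, t) ((0 : Fin (d-1) → ℝ), (1:ℝ))) t := hu'.comp_hasDerivAt t hg
      set L : ThinVec d →L[ℝ] ℝ :=
        (ContinuousLinearMap.proj i).comp (ContinuousLinearMap.fst ℝ (Fin (d-1) → ℝ) ℝ) with hL
      have : HasDerivAt (fun s => L (u (xb, s)))
          (L (fderiv ℝ u (xb, t) ((0 : Fin (d-1) → ℝ), (1:ℝ)))) t :=
        L.hasFDerivAt.comp_hasDerivAt t hcomp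
      exact this.deriv
    have hvd_cont : ∀ i, Continuous (deriv (v i)) := fun i => (hvC i).continuous_deriv le_rfl
    have hsum1 : (∫ t, G (xb,t) ∂μI) = ∑ i, ∫ t, v i t ^ 2 ∂μI := by
      rw [show (fun t => G (xb,t)) = fun t => ∑ i, v i t ^ 2 from rfl]
      exact integral_finset_sum _ fun i _ => hcont_int _ (((hvC i).continuous).pow 2)
    have hpoin : ∀ i, ∫ t, v i t ^ 2 ∂μI ≤ (2*ε)^2 * ∫ t, (deriv (v i) t)^2 ∂μI :=
      fun i => poincare1d hε (v i) (hvC i) (hv0 i)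
    have hptw : ∀ t, ∑ i, (deriv (v i) t)^2 ≤ jacSq u (xb, t) := by
      intro t
      have h1 : ∑ i, (deriv (v i) t)^2
          ≤ vecSq (fderiv ℝ u (xb,t) ((0 : Fin (d-1) → ℝ), (1:ℝ))) := by
        simp only [hderiv]
        exact le_add_of_nonneg_right (sq_nonneg _)
      exact h1.trans (le_add_of_nonneg_left (Finset.sum_nonneg fun j _ => vecSq_nonneg _))
    calc (∫ t, G (xb,t) ∂μI) = ∑ i, ∫ t, v i t ^ 2 ∂μI := hsum1
      _ ≤ ∑ i, (2*ε)^2 * ∫ t, (deriv (v i) t)^2 ∂μI := Finset.sum_le_sum fun i _ => hpoin i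
      _ = (2*ε)^2 * ∑ i, ∫ t, (deriv (v i) t)^2 ∂μI := by rw [Finset.mul_sum]
      _ = (2*ε)^2 * ∫ t, ∑ i, (deriv (v i) t)^2 ∂μI := by
          rw [integral_finset_sum _ fun i _ => hcont_int (fun t => deriv (v i) t ^ 2) ((hvd_cont i).pow 2)]
      _ ≤ (2*ε)^2 * ∫ t, jacSq u (xb,t) ∂μI := by
          apply mul_le_mul_of_nonneg_left ?_ (sq_nonneg _)
          apply integral_mono
            (integrable_finset_sum _ fun i _ => hcont_int _ ((hvd_cont i).pow 2))
            (hcont_int _ (hjc.comp (Continuous.prodMk_right xb)))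
            hptw
  -- Fubini
  have hGint' : Integrable G (μΩ.prod μI) := hprod ▸ hGint
  have hJint' : Integrable (jacSq u) (μΩ.prod μI) := hprod ▸ hJint
  have hGJ : ∫ x, G x ∂μP ≤ (2*ε)^2 * J := by
    have hGfub : ∫ x, G x ∂μP = ∫ xb, ∫ t, G (xb,t) ∂μI ∂μΩ := by
      rw [hprod]; exact integral_prod _ hGint'
    have hJfub : ∫ x, jacSq u x ∂μP = ∫ xb, ∫ t, jacSq u (xb,t) ∂μI ∂μΩ := by
      rw [hprod]; exact integral_prod _ hJint'
    rw [hGfub]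
    have h1 : Integrable (fun xb => ∫ t, G (xb,t) ∂μI) μΩ := hGint'.integral_prod_left
    have h2 : Integrable (fun xb => ∫ t, jacSq u (xb,t) ∂μI) μΩ := hJint'.integral_prod_left
    calc (∫ xb, ∫ t, G (xb,t) ∂μI ∂μΩ)
        ≤ ∫ xb, (2*ε)^2 * ∫ t, jacSq u (xb,t) ∂μI ∂μΩ :=
          integral_mono h1 (h2.const_mul _) hslice
      _ = (2*ε)^2 * ∫ xb, ∫ t, jacSq u (xb,t) ∂μI ∂μΩ := integral_const_mul _ _
      _ = (2*ε)^2 * J := by rw [hJ, hJfub]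
  -- F-side Fubini
  have hFPint : Integrable (fun x : ThinVec d => F x.1) μP := by
    rw [hprod]
    have := hFint.mul_prod (integrable_const (μ := μI) (1:ℝ))
    simpa using this
  have haF : ∫ x, F x.1 ∂μP = A * (2*ε) := by
    rw [hprod]
    have h := integral_prod_mul (μ := μΩ) (ν := μI) F (fun _ => (1:ℝ))
    simp only [mul_one] at h
    rw [show (fun x : ThinVec d => F x.1) = fun z : ThinVec d => F z.1 from rfl, h]
    congr 1
    rw [integral_const, smul_eq_mul, mul_one, measureReal_def, hμI, Measure.restrict_apply_univ, hIdef,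
      Real.volume_Ioo, ENNReal.toReal_ofReal (by linarith)]
    ring
  -- a, b and Cauchy–Schwarz on the product
  set a : ThinVec d → ℝ := fun x => Real.sqrt (F x.1) with ha
  set b : ThinVec d → ℝ := fun x => Real.sqrt (G x) with hb
  have hFm' : AEStronglyMeasurable (fun x : ThinVec d => F x.1) μP := by
    rw [hprod]; exact hFm.comp_fst
  have ham : AEStronglyMeasurable a μP := Real.continuous_sqrt.comp_aestronglyMeasurable hFm'
  have hbm : AEStronglyMeasurable b μP := (Real.continuous_sqrt.comp hGc).aestronglyMeasurable
  have ha2 : (fun x : ThinVec d => a x ^ 2) = fun x => F x.1 :=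
    funext fun x => Real.sq_sqrt (hFnn _)
  have hb2 : (fun x : ThinVec d => b x ^ 2) = fun x => G x :=
    funext fun x => Real.sq_sqrt (hGnn _)
  have haL2 : MemLp a 2 μP := (memLp_two_iff_integrable_sq ham).2 (by rw [ha2]; exact hFPint)
  have hbL2 : MemLp b 2 μP := (memLp_two_iff_integrable_sq hbm).2 (by rw [hb2]; exact hGint)
  set φ : ThinVec d → ℝ := fun x => ∑ i, f₁ x.1 i * (u x).1 i with hφ
  have hφm : AEStronglyMeasurable φ μP := by
    rw [hprod]
    exact Finset.aestronglyMeasurable_fun_sum _ fun i _ =>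
      ((hmi i).comp_fst.mul
        (((continuous_apply i).comp (continuous_fst.comp huc)).aestronglyMeasurable))
  have hφab : ∀ x, |φ x| ≤ a x * b x := by
    intro x
    have hle := Real.sum_mul_le_sqrt_mul_sqrt Finset.univ
      (fun i => f₁ x.1 i) (fun i => (u x).1 i)
    have hge := Real.sum_mul_le_sqrt_mul_sqrt Finset.univ
      (fun i => -f₁ x.1 i) (fun i => (u x).1 i)
    simp only [neg_mul, Finset.sum_neg_distrib, neg_sq] at hge
    rw [abs_le]
    constructor
    · have : -(a x * b x) ≤ -(-(φ x)) := neg_le_neg (by simpa [ha, hb, hφ] using hge)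
      simpa using this
    · simpa [ha, hb, hφ] using hle
  have hab_int : Integrable (fun x => a x * b x) μP := by
    have hint : Integrable (fun x : ThinVec d => (F x.1 + G x)/2) μP :=
      (hFPint.add hGint).div_const 2
    refine hint.mono' (ham.mul hbm) ?_
    filter_upwards with x
    have h1 : 0 ≤ a x := Real.sqrt_nonneg _
    have h2 : 0 ≤ b x := Real.sqrt_nonneg _
    have h3 : a x ^ 2 = F x.1 := Real.sq_sqrt (hFnn _)
    have h4 : b x ^ 2 = G x := Real.sq_sqrt (hGnn _)
    rw [Real.norm_eq_abs, abs_of_nonneg (mul_nonneg h1 h2)]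
    nlinarith [sq_nonneg (a x - b x)]
  have hφint : Integrable φ μP := hab_int.mono' hφm
    (by filter_upwards with x; rw [Real.norm_eq_abs]; exact hφab x)
  have step1 : |∫ x, φ x ∂μP| ≤
      Real.sqrt (∫ x, a x ^ 2 ∂μP) * Real.sqrt (∫ x, b x ^ 2 ∂μP) := by
    have h1 : |∫ x, φ x ∂μP| ≤ ∫ x, |φ x| ∂μP := by
      simpa [Real.norm_eq_abs] using norm_integral_le_integral_norm (μ := μP) φ
    have h2 : ∫ x, |φ x| ∂μP ≤ ∫ x, a x * b x ∂μP :=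
      integral_mono hφint.abs hab_int fun x => hφab x
    exact h1.trans (h2.trans (integral_CS haL2 hbL2))
  -- final arithmetic
  have hstepa : ∫ x, a x ^ 2 ∂μP = A * (2*ε) := by rw [ha2, haF]
  have hstepb : ∫ x, b x ^ 2 ∂μP ≤ (2*ε)^2 * J := by rw [hb2]; exact hGJ
  have hbnn : 0 ≤ ∫ x, b x ^ 2 ∂μP := integral_nonneg fun x => sq_nonneg _
  have hsq2 : Real.sqrt (∫ x, b x ^ 2 ∂μP) ≤ 2 * ε * Real.sqrt J := by
    calc Real.sqrt (∫ x, b x ^ 2 ∂μP) ≤ Real.sqrt ((2*ε)^2 * J) := Real.sqrt_le_sqrt hstepb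
      _ = 2*ε*Real.sqrt J := by
          rw [Real.sqrt_mul (sq_nonneg _), Real.sqrt_sq (by linarith)]
  have hrw : ε ^ ((3:ℝ)/2) = ε * Real.sqrt ε := by
    rw [show (3:ℝ)/2 = 1 + 1/2 by norm_num, Real.rpow_add hε, Real.rpow_one,
      ← Real.sqrt_eq_rpow]
  have hsq1 : Real.sqrt (A * (2*ε)) = Real.sqrt A * (Real.sqrt 2 * Real.sqrt ε) := by
    rw [Real.sqrt_mul hAnn, Real.sqrt_mul (by norm_num : (0:ℝ) ≤ 2)]
  calc |∫ x, φ x ∂μP|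
      ≤ Real.sqrt (∫ x, a x ^ 2 ∂μP) * Real.sqrt (∫ x, b x ^ 2 ∂μP) := step1
    _ = Real.sqrt (A * (2*ε)) * Real.sqrt (∫ x, b x ^ 2 ∂μP) := by rw [hstepa]
    _ ≤ Real.sqrt (A * (2*ε)) * (2 * ε * Real.sqrt J) :=
        mul_le_mul_of_nonneg_left hsq2 (Real.sqrt_nonneg _)
    _ = 2 * Real.sqrt 2 * ε ^ ((3:ℝ)/2) * Real.sqrt A * Real.sqrt J := by
        rw [hsq1, hrw]; ring
end
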